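/- For ℓ ∈ N, the pair u(s) = cos(ℓ s), w(s) = −(3ℓ²/(1+2ℓ²)) cos(ℓ s) satisfies the weak formulation: for all 2π-periodic test functions φ₁ ∈ H² and φ₂ ∈ H¹ on (0, 2π), ∫₀^{2π} [u''φ₁'' + 2u'φ₁' + w'φ₁' + 2w'φ₁' + 2w'φ₂' + u'φ₂' + 2u'φ₂' + wφ₂] ds = η ∫₀^{2π} u φ₁ ds with η = 2ℓ²(ℓ²−1)²/(1+2ℓ²). -/

import Mathlib

open Real

private lemma hd_cos (ℓ : ℕ) (s : ℝ) :
    HasDerivAt (fun t : ℝ => cos (ℓ * t)) (-(ℓ : ℝ) * sin (ℓ * s)) s := by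
  have h1 : HasDerivAt (fun t : ℝ => (ℓ : ℝ) * t) (ℓ : ℝ) s := by
    simpa using (hasDerivAt_id s).const_mul (ℓ : ℝ)
  have h2 := (Real.hasDerivAt_cos ((ℓ : ℝ) * s)).comp s h1
  have he : -(ℓ : ℝ) * sin (ℓ * s) = -sin ((ℓ:ℝ) * s) * ℓ := by ring
  rw [he]; exact h2

private lemma hd_sin (ℓ : ℕ) (s : ℝ) :
    HasDerivAt (fun t : ℝ => sin (ℓ * t)) ((ℓ : ℝ) * cos (ℓ * s)) s := by
  have h1 : HasDerivAt (fun t : ℝ => (ℓ : ℝ) * t) (ℓ : ℝ) s := by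
    simpa using (hasDerivAt_id s).const_mul (ℓ : ℝ)
  have h2 := (Real.hasDerivAt_sin ((ℓ : ℝ) * s)).comp s h1
  have he : (ℓ : ℝ) * cos (ℓ * s) = cos ((ℓ:ℝ) * s) * ℓ := by ring
  rw [he]; exact h2

private lemma deriv_cos_eq (ℓ : ℕ) :
    deriv (fun t : ℝ => cos (ℓ * t)) = fun s => -(ℓ : ℝ) * sin (ℓ * s) :=
  funext fun s => (hd_cos ℓ s).deriv

private lemma sin_two_pi_nat (ℓ : ℕ) : sin ((ℓ : ℝ) * (2 * π)) = 0 := by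
  have : (ℓ : ℝ) * (2 * π) = (2 * ℓ : ℕ) * π := by push_cast; ring
  rw [this, Real.sin_nat_mul_pi]

/-- IBP: `∫ sin(ℓs) φ' = -ℓ ∫ cos(ℓs) φ` (boundary terms vanish since `sin` vanishes). -/
private lemma ibp_sin (ℓ : ℕ) (φ : ℝ → ℝ) (hφ : ContDiff ℝ 1 φ) :
    ∫ s in (0:ℝ)..(2*π), sin (ℓ * s) * deriv φ s
      = -(ℓ : ℝ) * ∫ s in (0:ℝ)..(2*π), cos (ℓ * s) * φ s := by
  have hderiv : Continuous (deriv φ) := hφ.continuous_deriv le_rfl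
  have h := intervalIntegral.integral_mul_deriv_eq_deriv_mul
    (u := fun s => sin (ℓ * s)) (u' := fun s => (ℓ : ℝ) * cos (ℓ * s))
    (v := φ) (v' := deriv φ) (a := (0:ℝ)) (b := 2*π)
    (fun x _ => hd_sin ℓ x)
    (fun x _ => (hφ.differentiable one_ne_zero x).hasDerivAt)
    ((continuous_const.mul (Real.continuous_cos.comp (by fun_prop))).intervalIntegrable _ _)
    (hderiv.intervalIntegrable _ _)
  rw [h]
  simp [sin_two_pi_nat, mul_assoc, intervalIntegral.integral_const_mul]

/-- IBP: `∫ cos(ℓs) φ' = ℓ ∫ sin(ℓs) φ` for `2π`-periodic `φ`. -/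
private lemma ibp_cos (ℓ : ℕ) (φ : ℝ → ℝ) (hφ : ContDiff ℝ 1 φ)
    (hp : Function.Periodic φ (2*π)) :
    ∫ s in (0:ℝ)..(2*π), cos (ℓ * s) * deriv φ s
      = (ℓ : ℝ) * ∫ s in (0:ℝ)..(2*π), sin (ℓ * s) * φ s := by
  have hderiv : Continuous (deriv φ) := hφ.continuous_deriv le_rfl
  have h := intervalIntegral.integral_mul_deriv_eq_deriv_mul
    (u := fun s => cos (ℓ * s)) (u' := fun s => -(ℓ : ℝ) * sin (ℓ * s))
    (v := φ) (v' := deriv φ) (a := (0:ℝ)) (b := 2*π)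
    (fun x _ => hd_cos ℓ x)
    (fun x _ => (hφ.differentiable one_ne_zero x).hasDerivAt)
    ((continuous_const.mul (Real.continuous_sin.comp (by fun_prop))).intervalIntegrable _ _)
    (hderiv.intervalIntegrable _ _)
  have hb : φ (2*π) = φ 0 := by simpa using hp 0
  have hc : cos ((ℓ : ℝ) * (2*π)) = 1 := by
    have : (ℓ : ℝ) * (2 * π) = (ℓ : ℕ) * (2 * π) := by ring
    rw [this, Real.cos_nat_mul_two_pi]
  rw [h]
  beta_reduce
  rw [hb, hc]
  simp [mul_assoc, intervalIntegral.integral_const_mul]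

theorem circle_weak_formulation (ℓ : ℕ) :
    ∀ φ₁ φ₂ : ℝ → ℝ,
      ContDiff ℝ 2 φ₁ → Function.Periodic φ₁ (2 * π) →
      ContDiff ℝ 1 φ₂ → Function.Periodic φ₂ (2 * π) →
      (∫ s in (0 : ℝ)..(2 * π),
        (iteratedDeriv 2 (fun t : ℝ => cos (ℓ * t)) s * iteratedDeriv 2 φ₁ s
          + 2 * deriv (fun t : ℝ => cos (ℓ * t)) s * deriv φ₁ s
          + deriv (fun t : ℝ => -(3 * (ℓ : ℝ) ^ 2 / (1 + 2 * (ℓ : ℝ) ^ 2)) * cos (ℓ * t)) s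
              * deriv φ₁ s
          + 2 * deriv (fun t : ℝ => -(3 * (ℓ : ℝ) ^ 2 / (1 + 2 * (ℓ : ℝ) ^ 2)) * cos (ℓ * t)) s
              * deriv φ₁ s
          + 2 * deriv (fun t : ℝ => -(3 * (ℓ : ℝ) ^ 2 / (1 + 2 * (ℓ : ℝ) ^ 2)) * cos (ℓ * t)) s
              * deriv φ₂ s
          + deriv (fun t : ℝ => cos (ℓ * t)) s * deriv φ₂ s
          + 2 * deriv (fun t : ℝ => cos (ℓ * t)) s * deriv φ₂ s
          + (-(3 * (ℓ : ℝ) ^ 2 / (1 + 2 * (ℓ : ℝ) ^ 2)) * cos (ℓ * s)) * φ₂ s))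
      = (2 * (ℓ : ℝ) ^ 2 * ((ℓ : ℝ) ^ 2 - 1) ^ 2 / (1 + 2 * (ℓ : ℝ) ^ 2)) *
          ∫ s in (0 : ℝ)..(2 * π), cos (ℓ * s) * φ₁ s := by
  intro φ₁ φ₂ hφ₁ hp₁ hφ₂ hp₂
  set c : ℝ := -(3 * (ℓ : ℝ) ^ 2 / (1 + 2 * (ℓ : ℝ) ^ 2)) with hc
  -- explicit derivatives of u and w
  have hdu : deriv (fun t : ℝ => cos (ℓ * t)) = fun s => -(ℓ : ℝ) * sin (ℓ * s) :=
    deriv_cos_eq ℓ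
  have hdw : deriv (fun t : ℝ => c * cos (ℓ * t)) = fun s => c * (-(ℓ : ℝ) * sin (ℓ * s)) :=
    funext fun s => (((hd_cos ℓ s)).const_mul c).deriv
  have hdu2 : iteratedDeriv 2 (fun t : ℝ => cos (ℓ * t))
      = fun s => -(ℓ : ℝ)^2 * cos (ℓ * s) := by
    rw [show (2:ℕ) = 1 + 1 from rfl, iteratedDeriv_succ, iteratedDeriv_one, hdu]
    funext s
    have : HasDerivAt (fun s : ℝ => -(ℓ:ℝ) * sin (ℓ * s)) (-(ℓ:ℝ) * ((ℓ:ℝ) * cos (ℓ * s))) s :=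
      (hd_sin ℓ s).const_mul (-(ℓ:ℝ))
    rw [this.deriv]; ring
  -- basic integrals
  have hdφ₁ : ContDiff ℝ 1 (deriv φ₁) := (contDiff_succ_iff_deriv.mp (show ContDiff ℝ (1+1) φ₁ by exact_mod_cast hφ₁)).2.2
  have hpd₁ : Function.Periodic (deriv φ₁) (2 * π) := fun x => by
    have h1 : deriv (fun y : ℝ => φ₁ (y + 2 * π)) x = deriv φ₁ (x + 2 * π) :=
      deriv_comp_add_const φ₁ (2 * π) x
    have h2 : (fun y : ℝ => φ₁ (y + 2 * π)) = φ₁ := funext fun y => hp₁ y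
    rw [← h1, h2]
  have I2 : ∫ s in (0:ℝ)..(2*π), sin (ℓ * s) * deriv φ₁ s
      = -(ℓ : ℝ) * ∫ s in (0:ℝ)..(2*π), cos (ℓ * s) * φ₁ s :=
    ibp_sin ℓ φ₁ (hφ₁.of_le one_le_two)
  have I3 : ∫ s in (0:ℝ)..(2*π), sin (ℓ * s) * deriv φ₂ s
      = -(ℓ : ℝ) * ∫ s in (0:ℝ)..(2*π), cos (ℓ * s) * φ₂ s :=
    ibp_sin ℓ φ₂ hφ₂
  have I1 : ∫ s in (0:ℝ)..(2*π), cos (ℓ * s) * iteratedDeriv 2 φ₁ s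
      = -(ℓ : ℝ)^2 * ∫ s in (0:ℝ)..(2*π), cos (ℓ * s) * φ₁ s := by
    have : iteratedDeriv 2 φ₁ = deriv (deriv φ₁) := by
      rw [show (2:ℕ) = 1 + 1 from rfl, iteratedDeriv_succ, iteratedDeriv_one]
    rw [this, ibp_cos ℓ (deriv φ₁) hdφ₁ hpd₁, I2]; ring
  -- rewrite the integrand as a linear combination
  have key : (∫ s in (0 : ℝ)..(2 * π),
        (iteratedDeriv 2 (fun t : ℝ => cos (ℓ * t)) s * iteratedDeriv 2 φ₁ s
          + 2 * deriv (fun t : ℝ => cos (ℓ * t)) s * deriv φ₁ s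
          + deriv (fun t : ℝ => c * cos (ℓ * t)) s * deriv φ₁ s
          + 2 * deriv (fun t : ℝ => c * cos (ℓ * t)) s * deriv φ₁ s
          + 2 * deriv (fun t : ℝ => c * cos (ℓ * t)) s * deriv φ₂ s
          + deriv (fun t : ℝ => cos (ℓ * t)) s * deriv φ₂ s
          + 2 * deriv (fun t : ℝ => cos (ℓ * t)) s * deriv φ₂ s
          + (c * cos (ℓ * s)) * φ₂ s))
      = (-(ℓ:ℝ)^2) * (∫ s in (0:ℝ)..(2*π), cos (ℓ * s) * iteratedDeriv 2 φ₁ s)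
        + ((-2 - 3*c) * (ℓ:ℝ)) * (∫ s in (0:ℝ)..(2*π), sin (ℓ * s) * deriv φ₁ s)
        + ((-3 - 2*c) * (ℓ:ℝ)) * (∫ s in (0:ℝ)..(2*π), sin (ℓ * s) * deriv φ₂ s)
        + c * (∫ s in (0:ℝ)..(2*π), cos (ℓ * s) * φ₂ s) := by
    rw [← intervalIntegral.integral_const_mul, ← intervalIntegral.integral_const_mul,
        ← intervalIntegral.integral_const_mul, ← intervalIntegral.integral_const_mul]
    have hcont1 : Continuous (deriv φ₁) := (hφ₁.of_le one_le_two).continuous_deriv le_rfl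
    have hcont2 : Continuous (deriv φ₂) := hφ₂.continuous_deriv le_rfl
    have hcontD2 : Continuous (iteratedDeriv 2 φ₁) := by
      rw [show (2:ℕ) = 1 + 1 from rfl, iteratedDeriv_succ, iteratedDeriv_one]
      exact hdφ₁.continuous_deriv le_rfl
    have hcφ₁ : Continuous φ₁ := hφ₁.continuous
    have hcφ₂ : Continuous φ₂ := hφ₂.continuous
    rw [← intervalIntegral.integral_add, ← intervalIntegral.integral_add,
        ← intervalIntegral.integral_add]
    · apply intervalIntegral.integral_congr
      intro s _
      simp only [hdu, hdw, hdu2]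
      ring
    all_goals
      apply Continuous.intervalIntegrable
      fun_prop
  rw [key, I1, I2, I3]
  have hden : (1 + 2 * (ℓ : ℝ) ^ 2) ≠ 0 := by positivity
  have hφ₂int : (∫ s in (0:ℝ)..(2*π), cos (ℓ * s) * φ₂ s) = (∫ s in (0:ℝ)..(2*π), cos (ℓ * s) * φ₂ s) := rfl
  rw [hc]
  field_simp
  ring
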